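/- Under the LTE assumptions, with Y₁ integrable, the weighted contrast identifies the complier mean of the treated potential outcome: E[T·Z·Y/e] − E[T·(1−Z)·Y/(1−e)] = ℙ(T₁ > T₀)·E[Y₁ | T₁ > T₀]. In particular, if also ℙ(T₁ > T₀) > 0, dividing by κ₁(e) = ℙ(T₁ > T₀) identifies E[Y₁ | T₁ > T₀]. (This is the identification of E[Y₁^c] in equation (6) of Example 2.2.) -/

import Mathlib

open MeasureTheory ProbabilityTheory Set
open scoped NNReal ENNReal

lemma aux_int {Ω : Type*} {m' : MeasurableSpace Ω} [mΩ : MeasurableSpace Ω]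
    (P : Measure Ω) [IsProbabilityMeasure P] (hm' : m' ≤ mΩ)
    {D B : Set Ω} (hD : MeasurableSet[mΩ] D) (hB : MeasurableSet[mΩ] B)
    (hindep : (P[(D ∩ B).indicator (fun _ => (1:ℝ)) | m'])
        =ᵐ[P] (P[D.indicator (fun _ => (1:ℝ)) | m']) * (P[B.indicator (fun _ => (1:ℝ)) | m']))
    {w : Ω → ℝ} (hw : StronglyMeasurable[m'] w) {M : ℝ} (hwM : ∀ᵐ ω ∂P, ‖w ω‖ ≤ M)
    (hwB : (fun ω => w ω * (P[B.indicator (fun _ => (1:ℝ)) | m']) ω) =ᵐ[P] fun _ => 1) :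
    ∫ ω, (D ∩ B).indicator (fun _ => (1:ℝ)) ω * w ω ∂P = (P D).toReal := by
  haveI : SigmaFinite (P.trim hm') := inferInstance
  have hDB : MeasurableSet[mΩ] (D ∩ B) := hD.inter hB
  have hind_int : Integrable ((D ∩ B).indicator fun _ => (1:ℝ)) P :=
    (integrable_const (1:ℝ)).indicator hDB
  have hwmeas : AEStronglyMeasurable w P := (hw.mono hm').aestronglyMeasurable
  have hmul_int : Integrable (fun ω => w ω * (D ∩ B).indicator (fun _ => (1:ℝ)) ω) P :=
    hind_int.bdd_mul hwmeas hwM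
  have h1 : (fun ω => (D ∩ B).indicator (fun _ => (1:ℝ)) ω * w ω)
      = w * (D ∩ B).indicator (fun _ => (1:ℝ)) := by
    funext ω; exact mul_comm _ _
  rw [h1, ← integral_condExp hm']
  have h2 : P[w * (D ∩ B).indicator (fun _ => (1:ℝ)) | m']
      =ᵐ[P] P[D.indicator (fun _ => (1:ℝ)) | m'] := by
    refine (condExp_mul_of_stronglyMeasurable_left hw (by exact hmul_int) hind_int).trans ?_
    filter_upwards [hindep, hwB] with ω h1 h2
    simp only [Pi.mul_apply] at h1 h2 ⊢
    rw [h1]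
    calc w ω * ((P[D.indicator (fun _ => (1:ℝ)) | m']) ω
          * (P[B.indicator (fun _ => (1:ℝ)) | m']) ω)
        = (P[D.indicator (fun _ => (1:ℝ)) | m']) ω
          * (w ω * (P[B.indicator (fun _ => (1:ℝ)) | m']) ω) := by ring
      _ = _ := by rw [h2]; ring
  rw [integral_congr_ae h2, integral_condExp hm']
  rw [integral_indicator_const (1:ℝ) hD, smul_eq_mul, mul_one, measureReal_def]

lemma aux_fun {Ω : Type*} {m' mV : MeasurableSpace Ω} [mΩ : MeasurableSpace Ω]
    (P : Measure Ω) [IsProbabilityMeasure P] (hm' : m' ≤ mΩ) (hmV : mV ≤ mΩ)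
    {B : Set Ω} (hB : MeasurableSet[mΩ] B)
    (hindep : ∀ D : Set Ω, MeasurableSet[mV] D →
      (P[(D ∩ B).indicator (fun _ => (1:ℝ)) | m'])
        =ᵐ[P] (P[D.indicator (fun _ => (1:ℝ)) | m']) * (P[B.indicator (fun _ => (1:ℝ)) | m']))
    {w : Ω → ℝ} (hw : StronglyMeasurable[m'] w) {M : ℝ} (hwM : ∀ᵐ ω ∂P, ‖w ω‖ ≤ M)
    (hw0 : 0 ≤ᵐ[P] w)
    (hwB : (fun ω => w ω * (P[B.indicator (fun _ => (1:ℝ)) | m']) ω) =ᵐ[P] fun _ => 1)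
    {g : Ω → ℝ} (hg : StronglyMeasurable[mV] g) :
    ∫ ω, B.indicator (fun _ => (1:ℝ)) ω * w ω * g ω ∂P = ∫ ω, g ω ∂P := by
  have hwm : Measurable[mΩ] w := (hw.mono hm').measurable
  set d : Ω → ℝ≥0 := fun ω => Real.toNNReal (B.indicator (fun _ => (1:ℝ)) ω * w ω) with hd
  have hdmeas : Measurable d :=
    ((measurable_const.indicator hB).mul hwm).real_toNNReal
  set ν : Measure Ω := P.withDensity (fun ω => (d ω : ℝ≥0∞)) with hν
  have hagree : ∀ s : Set Ω, MeasurableSet[mV] s → ν s = P s := by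
    intro s hs
    have hsΩ : MeasurableSet[mΩ] s := hmV s hs
    have hint : Integrable (fun ω => (s ∩ B).indicator (fun _ => (1:ℝ)) ω * w ω) P := by
      have := ((integrable_const (1:ℝ)).indicator (hsΩ.inter hB)).bdd_mul
        ((hw.mono hm').aestronglyMeasurable) hwM
      simpa [mul_comm] using this
    have hnn : 0 ≤ᵐ[P] fun ω => (s ∩ B).indicator (fun _ => (1:ℝ)) ω * w ω := by
      filter_upwards [hw0] with ω h0
      exact mul_nonneg (indicator_nonneg (fun _ _ => zero_le_one) ω) h0
    have heq : (fun ω => s.indicator (fun ω => ((d ω : ℝ≥0∞))) ω)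
        = fun ω => ENNReal.ofReal ((s ∩ B).indicator (fun _ => (1:ℝ)) ω * w ω) := by
      funext ω
      by_cases hωs : ω ∈ s <;> by_cases hωB : ω ∈ B <;>
        simp [hωs, hωB, d, Set.indicator_apply, mem_inter_iff, ENNReal.ofReal]
    rw [hν, withDensity_apply _ hsΩ, ← lintegral_indicator hsΩ, heq,
      ← ofReal_integral_eq_lintegral_ofReal hint hnn,
      aux_int P hm' hsΩ hB (hindep s hs) hw hwM hwB,
      ENNReal.ofReal_toReal (measure_ne_top P s)]
  have htrim : ν.trim hmV = P.trim hmV := by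
    refine @Measure.ext Ω mV _ _ (fun s hs => ?_)
    rw [trim_measurableSet_eq hmV hs, trim_measurableSet_eq hmV hs, hagree s hs]
  have hgν : ∫ ω, g ω ∂ν = ∫ ω, g ω ∂P := by
    calc ∫ ω, g ω ∂ν = ∫ ω, g ω ∂(ν.trim hmV) := integral_trim hmV hg
      _ = ∫ ω, g ω ∂(P.trim hmV) := by rw [htrim]
      _ = ∫ ω, g ω ∂P := (integral_trim hmV hg).symm
  rw [← hgν, hν, integral_withDensity_eq_integral_smul hdmeas]
  refine integral_congr_ae ?_
  filter_upwards [hw0] with ω h0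
  have hds : (d ω : ℝ) = B.indicator (fun _ => (1:ℝ)) ω * w ω :=
    Real.coe_toNNReal _ (mul_nonneg (indicator_nonneg (fun _ _ => zero_le_one) ω) h0)
  simp [NNReal.smul_def, smul_eq_mul, hds]

lemma key_identity
    {Ω : Type*} {m' mV : MeasurableSpace Ω}
    [mΩ : MeasurableSpace Ω] [StandardBorelSpace Ω] [Nonempty Ω]
    (P : Measure Ω) [IsProbabilityMeasure P]
    (Y0 Y1 Z T0 T1 T Y : Ω → ℝ)
    (hY0 : Measurable Y0) (hY1 : Measurable Y1) (hZ : Measurable Z)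
    (hT0 : Measurable T0) (hT1 : Measurable T1)
    (hm' : m' ≤ mΩ)
    (hmVeq : mV = MeasurableSpace.comap (fun ω => (Y0 ω, Y1 ω, T0 ω, T1 ω)) inferInstance)
    (hZbin : ∀ ω, Z ω = 0 ∨ Z ω = 1)
    (hT0bin : ∀ ω, T0 ω = 0 ∨ T0 ω = 1) (hT1bin : ∀ ω, T1 ω = 0 ∨ T1 ω = 1)
    (hTdef : ∀ ω, T ω = Z ω * T1 ω + (1 - Z ω) * T0 ω)
    (hYdef : ∀ ω, Y ω = T ω * Y1 ω + (1 - T ω) * Y0 ω)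
    (hIY1 : Integrable Y1 P)
    (hci : CondIndepFun m' hm' (fun ω => (Y0 ω, Y1 ω, T0 ω, T1 ω)) Z P)
    (e : Ω → ℝ) (he : e =ᵐ[P] P[Z | m'])
    (ε : ℝ) (hε : 0 < ε)
    (hoverlap : ∀ᵐ ω ∂P, ε ≤ e ω ∧ e ω ≤ 1 - ε)
    (hmono : ∀ᵐ ω ∂P, T0 ω ≤ T1 ω) :
    ∫ ω, T ω * Z ω * Y ω / e ω ∂P - ∫ ω, T ω * (1 - Z ω) * Y ω / (1 - e ω) ∂P
      = ∫ ω in {ω | T0 ω < T1 ω}, Y1 ω ∂P := by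
  subst hmVeq

  have hV : Measurable (fun ω => (Y0 ω, Y1 ω, T0 ω, T1 ω)) := hY0.prodMk (hY1.prodMk (hT0.prodMk hT1))
  have hmV : MeasurableSpace.comap (fun ω => (Y0 ω, Y1 ω, T0 ω, T1 ω)) inferInstance ≤ mΩ := measurable_iff_comap_le.mp hV
  set et : Ω → ℝ := P[Z | m'] with hetdef
  have hoverlap' : ∀ᵐ ω ∂P, ε ≤ et ω ∧ et ω ≤ 1 - ε := by
    filter_upwards [hoverlap, he] with ω h1 h2
    rw [← h2]; exact h1
  have hZint : Integrable Z P := by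
    refine Integrable.mono' (integrable_const 1) hZ.aestronglyMeasurable
      (ae_of_all _ fun ω => ?_)
    rcases hZbin ω with h | h <;> simp [h]
  -- set-level conditional independence
  have hciset := (condIndepFun_iff m' hm' (fun ω => (Y0 ω, Y1 ω, T0 ω, T1 ω)) Z hV hZ P).mp hci
  -- membership in σ-algebras of V
  have hVmV : Measurable[MeasurableSpace.comap (fun ω => (Y0 ω, Y1 ω, T0 ω, T1 ω)) inferInstance] (fun ω => (Y0 ω, Y1 ω, T0 ω, T1 ω)) := fun s hs => ⟨s, hs, rfl⟩
  have hY1mV : Measurable[MeasurableSpace.comap (fun ω => (Y0 ω, Y1 ω, T0 ω, T1 ω)) inferInstance] Y1 := (measurable_fst.comp measurable_snd).comp hVmV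
  have hT0mV : Measurable[MeasurableSpace.comap (fun ω => (Y0 ω, Y1 ω, T0 ω, T1 ω)) inferInstance] T0 :=
    (measurable_fst.comp (measurable_snd.comp measurable_snd)).comp hVmV
  have hT1mV : Measurable[MeasurableSpace.comap (fun ω => (Y0 ω, Y1 ω, T0 ω, T1 ω)) inferInstance] T1 :=
    (measurable_snd.comp (measurable_snd.comp measurable_snd)).comp hVmV
  -- ### Branch Z = 1
  set B₁ : Set Ω := Z ⁻¹' {1} with hB₁def
  have hB₁meas : MeasurableSet B₁ := hZ (measurableSet_singleton 1)
  have hB₁ind : B₁.indicator (fun _ => (1:ℝ)) = Z := by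
    funext ω
    rcases hZbin ω with h | h <;>
      simp [indicator_apply, hB₁def, h, mem_preimage, mem_singleton_iff]
  have hindep1 : ∀ D : Set Ω, MeasurableSet[MeasurableSpace.comap (fun ω => (Y0 ω, Y1 ω, T0 ω, T1 ω)) inferInstance] D →
      (P[(D ∩ B₁).indicator (fun _ => (1:ℝ)) | m'])
        =ᵐ[P] (P[D.indicator (fun _ => (1:ℝ)) | m'])
          * (P[B₁.indicator (fun _ => (1:ℝ)) | m']) :=
    fun D hD => hciset D B₁ hD ⟨{1}, measurableSet_singleton 1, rfl⟩
  have hBe1 : P[B₁.indicator (fun _ => (1:ℝ)) | m'] = et := by rw [hB₁ind]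
  set w₁ : Ω → ℝ := fun ω => (et ω)⁻¹ with hw₁def
  have hw₁ : StronglyMeasurable[m'] w₁ :=
    (stronglyMeasurable_condExp.measurable.inv).stronglyMeasurable
  have hw₁M : ∀ᵐ ω ∂P, ‖w₁ ω‖ ≤ ε⁻¹ := by
    filter_upwards [hoverlap'] with ω hω
    have h0 : 0 < et ω := lt_of_lt_of_le hε hω.1
    rw [Real.norm_eq_abs, abs_of_nonneg (inv_nonneg.mpr h0.le)]
    exact inv_anti₀ hε hω.1
  have hw₁0 : 0 ≤ᵐ[P] w₁ := by
    filter_upwards [hoverlap'] with ω hω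
    exact inv_nonneg.mpr (le_trans hε.le hω.1)
  have hwB₁ : (fun ω => w₁ ω * (P[B₁.indicator (fun _ => (1:ℝ)) | m']) ω)
      =ᵐ[P] fun _ => 1 := by
    rw [hBe1]
    filter_upwards [hoverlap'] with ω hω
    exact inv_mul_cancel₀ (ne_of_gt (lt_of_lt_of_le hε hω.1))
  have hg₁ : StronglyMeasurable[MeasurableSpace.comap (fun ω => (Y0 ω, Y1 ω, T0 ω, T1 ω)) inferInstance] (fun ω => T1 ω * Y1 ω) :=
    (hT1mV.mul hY1mV).stronglyMeasurable
  have I₁ := aux_fun P hm' hmV hB₁meas hindep1 hw₁ hw₁M hw₁0 hwB₁ hg₁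
  -- ### Branch Z = 0
  set B₀ : Set Ω := Z ⁻¹' {0} with hB₀def
  have hB₀meas : MeasurableSet B₀ := hZ (measurableSet_singleton 0)
  have hB₀ind : B₀.indicator (fun _ => (1:ℝ)) = fun ω => 1 - Z ω := by
    funext ω
    rcases hZbin ω with h | h <;>
      simp [indicator_apply, hB₀def, h, mem_preimage, mem_singleton_iff]
  have hindep0 : ∀ D : Set Ω, MeasurableSet[MeasurableSpace.comap (fun ω => (Y0 ω, Y1 ω, T0 ω, T1 ω)) inferInstance] D →
      (P[(D ∩ B₀).indicator (fun _ => (1:ℝ)) | m'])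
        =ᵐ[P] (P[D.indicator (fun _ => (1:ℝ)) | m'])
          * (P[B₀.indicator (fun _ => (1:ℝ)) | m']) :=
    fun D hD => hciset D B₀ hD ⟨{0}, measurableSet_singleton 0, rfl⟩
  have hBe0 : P[B₀.indicator (fun _ => (1:ℝ)) | m'] =ᵐ[P] fun ω => 1 - et ω := by
    rw [hB₀ind]
    have h1 : (fun ω => 1 - Z ω) = (fun _ => (1:ℝ)) - Z := rfl
    rw [h1]
    refine (condExp_sub (integrable_const 1) hZint m').trans ?_
    rw [condExp_const hm' (1:ℝ)]
    exact Filter.EventuallyEq.rfl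
  set w₀ : Ω → ℝ := fun ω => (1 - et ω)⁻¹ with hw₀def
  have hw₀ : StronglyMeasurable[m'] w₀ :=
    ((measurable_const.sub stronglyMeasurable_condExp.measurable).inv).stronglyMeasurable
  have hw₀M : ∀ᵐ ω ∂P, ‖w₀ ω‖ ≤ ε⁻¹ := by
    filter_upwards [hoverlap'] with ω hω
    have hle : ε ≤ 1 - et ω := by linarith [hω.2]
    rw [Real.norm_eq_abs, abs_of_nonneg (inv_nonneg.mpr (le_trans hε.le hle))]
    exact inv_anti₀ hε hle
  have hw₀0 : 0 ≤ᵐ[P] w₀ := by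
    filter_upwards [hoverlap'] with ω hω
    have hle : ε ≤ 1 - et ω := by linarith [hω.2]
    exact inv_nonneg.mpr (le_trans hε.le hle)
  have hwB₀ : (fun ω => w₀ ω * (P[B₀.indicator (fun _ => (1:ℝ)) | m']) ω)
      =ᵐ[P] fun _ => 1 := by
    filter_upwards [hBe0, hoverlap'] with ω h1 h2
    have hle : ε ≤ 1 - et ω := by linarith [h2.2]
    rw [h1]
    exact inv_mul_cancel₀ (ne_of_gt (lt_of_lt_of_le hε hle))
  have hg₀ : StronglyMeasurable[MeasurableSpace.comap (fun ω => (Y0 ω, Y1 ω, T0 ω, T1 ω)) inferInstance] (fun ω => T0 ω * Y1 ω) :=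
    (hT0mV.mul hY1mV).stronglyMeasurable
  have I₀ := aux_fun P hm' hmV hB₀meas hindep0 hw₀ hw₀M hw₀0 hwB₀ hg₀
  -- ### rewrite the two goal integrals
  have hTZY : ∀ ω, T ω * Z ω * Y ω = Z ω * (T1 ω * Y1 ω) := by
    intro ω
    rcases hZbin ω with h | h <;> rcases hT1bin ω with h1 | h1 <;>
      rcases hT0bin ω with h0 | h0 <;>
      simp [hYdef ω, hTdef ω, h, h1, h0] <;> ring
  have hTZY' : ∀ ω, T ω * (1 - Z ω) * Y ω = (1 - Z ω) * (T0 ω * Y1 ω) := by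
    intro ω
    rcases hZbin ω with h | h <;> rcases hT1bin ω with h1 | h1 <;>
      rcases hT0bin ω with h0 | h0 <;>
      simp [hYdef ω, hTdef ω, h, h1, h0] <;> ring
  have hint1 : ∫ ω, T ω * Z ω * Y ω / e ω ∂P
      = ∫ ω, B₁.indicator (fun _ => (1:ℝ)) ω * w₁ ω * (T1 ω * Y1 ω) ∂P := by
    refine integral_congr_ae ?_
    filter_upwards [he] with ω hω
    rw [hTZY ω, hω]
    have hZω : B₁.indicator (fun _ => (1:ℝ)) ω = Z ω := by rw [hB₁ind]
    rw [hZω, hw₁def]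
    rw [div_eq_mul_inv]; ring
  have hint0 : ∫ ω, T ω * (1 - Z ω) * Y ω / (1 - e ω) ∂P
      = ∫ ω, B₀.indicator (fun _ => (1:ℝ)) ω * w₀ ω * (T0 ω * Y1 ω) ∂P := by
    refine integral_congr_ae ?_
    filter_upwards [he] with ω hω
    rw [hTZY' ω, hω]
    have hZω : B₀.indicator (fun _ => (1:ℝ)) ω = 1 - Z ω := by rw [hB₀ind]
    rw [hZω, hw₀def]
    rw [div_eq_mul_inv]; ring
  -- ### the difference equals the complier integral
  have hintg1 : Integrable (fun ω => T1 ω * Y1 ω) P := by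
    refine hIY1.bdd_mul (c := 1) hT1.aestronglyMeasurable (ae_of_all _ fun ω => ?_)
    rcases hT1bin ω with h | h <;> simp [h]
  have hintg0 : Integrable (fun ω => T0 ω * Y1 ω) P := by
    refine hIY1.bdd_mul (c := 1) hT0.aestronglyMeasurable (ae_of_all _ fun ω => ?_)
    rcases hT0bin ω with h | h <;> simp [h]
  set A : Set Ω := {ω | T0 ω < T1 ω} with hAdef
  have hA : MeasurableSet A := measurableSet_lt hT0 hT1
  have hdiff : ∫ ω, T ω * Z ω * Y ω / e ω ∂P
      - ∫ ω, T ω * (1 - Z ω) * Y ω / (1 - e ω) ∂P = ∫ ω in A, Y1 ω ∂P := by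
    rw [hint1, hint0, I₁, I₀, ← integral_sub hintg1 hintg0, ← integral_indicator hA]
    refine integral_congr_ae ?_
    filter_upwards [hmono] with ω hω
    rcases hT0bin ω with h0 | h0 <;> rcases hT1bin ω with h1 | h1
    · simp [indicator_apply, hAdef, mem_setOf_eq, h0, h1]
    · simp [indicator_apply, hAdef, mem_setOf_eq, h0, h1]
    · rw [h0, h1] at hω; norm_num at hω
    · simp [indicator_apply, hAdef, mem_setOf_eq, h0, h1]
  exact hdiff

theorem weighted_contrast_identifies_complier_mean
    {Ω : Type*} [MeasurableSpace Ω] [StandardBorelSpace Ω] [Nonempty Ω]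
    (P : Measure Ω) [IsProbabilityMeasure P] {k : ℕ}
    (Y0 Y1 Z T0 T1 T Y : Ω → ℝ) (X : Ω → Fin k → ℝ)
    (hY0 : Measurable Y0) (hY1 : Measurable Y1) (hZ : Measurable Z)
    (hT0 : Measurable T0) (hT1 : Measurable T1) (hX : Measurable X)
    (hZbin : ∀ ω, Z ω = 0 ∨ Z ω = 1)
    (hT0bin : ∀ ω, T0 ω = 0 ∨ T0 ω = 1) (hT1bin : ∀ ω, T1 ω = 0 ∨ T1 ω = 1)
    (hTdef : ∀ ω, T ω = Z ω * T1 ω + (1 - Z ω) * T0 ω)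
    (hYdef : ∀ ω, Y ω = T ω * Y1 ω + (1 - T ω) * Y0 ω)
    (hIY1 : Integrable Y1 P)
    (hci : CondIndepFun (MeasurableSpace.comap X inferInstance)
        (measurable_iff_comap_le.mp hX) (fun ω => (Y0 ω, Y1 ω, T0 ω, T1 ω)) Z P)
    (e : Ω → ℝ) (he : e =ᵐ[P] P[Z | MeasurableSpace.comap X inferInstance])
    (ε : ℝ) (hε : 0 < ε)
    (hoverlap : ∀ᵐ ω ∂P, ε ≤ e ω ∧ e ω ≤ 1 - ε)
    (hmono : ∀ᵐ ω ∂P, T0 ω ≤ T1 ω) :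
    (∫ ω, T ω * Z ω * Y ω / e ω ∂P - ∫ ω, T ω * (1 - Z ω) * Y ω / (1 - e ω) ∂P
        = (P {ω | T0 ω < T1 ω}).toReal
            * ∫ ω, Y1 ω ∂(P[|{ω | T0 ω < T1 ω}])) ∧
    (0 < P {ω | T0 ω < T1 ω} →
      (∫ ω, T ω * Z ω * Y ω / e ω ∂P - ∫ ω, T ω * (1 - Z ω) * Y ω / (1 - e ω) ∂P)
          / (P {ω | T0 ω < T1 ω}).toReal
        = ∫ ω, Y1 ω ∂(P[|{ω | T0 ω < T1 ω}])) := by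
  have hdiff := key_identity (mV := MeasurableSpace.comap
      (fun ω => (Y0 ω, Y1 ω, T0 ω, T1 ω)) inferInstance)
      P Y0 Y1 Z T0 T1 T Y hY0 hY1 hZ hT0 hT1 (measurable_iff_comap_le.mp hX) rfl
      hZbin hT0bin hT1bin hTdef hYdef hIY1 hci e he ε hε hoverlap hmono
  set A : Set Ω := {ω | T0 ω < T1 ω} with hAdef
  have hcond : ∫ ω, Y1 ω ∂(P[|A]) = ((P A)⁻¹).toReal * ∫ ω in A, Y1 ω ∂P := by
    rw [ProbabilityTheory.cond, integral_smul_measure, smul_eq_mul]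
  constructor
  · rw [hdiff, hcond]
    by_cases hA0 : P A = 0
    · rw [Measure.restrict_eq_zero.mpr hA0, integral_zero_measure, hA0]
      simp
    · have hne : (P A).toReal ≠ 0 := ENNReal.toReal_ne_zero.mpr ⟨hA0, measure_ne_top P A⟩
      rw [ENNReal.toReal_inv, ← mul_assoc, mul_inv_cancel₀ hne, one_mul]
  · intro hpos
    have hne : (P A).toReal ≠ 0 :=
      ENNReal.toReal_ne_zero.mpr ⟨ne_of_gt hpos, measure_ne_top P A⟩
    rw [hdiff, hcond, ENNReal.toReal_inv, inv_mul_eq_div]
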